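/- Let k be a field of characteristic 2 and s = Σ_{i≥0}(t³+t⁴)^{2^i}. Then (t³+t⁴) + Σ_{i≥1}(t³(1+t))^{2^i} = s, and consequently t/(1+t) + (t³+t⁴)/(1+t)² + (Σ_{i≥1}(t³(1+t))^{2^i})/(1+t)² equals the series t + t² + Σ_{j≥0} Σ_{ℓ=0}^{2^j−1} t^{6·2^j+2ℓ}, using that (1+t)^{2^i} = 1 + t^{2^i} in characteristic 2. -/

import Mathlib

open PowerSeries
noncomputable section

variable (k : Type*) [Field k]

/-- The power series `s = Σ_{i≥0} (t³+t⁴)^{2^i}` in `k[[t]]`, given coefficientwise. -/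
def paperS : PowerSeries k :=
  PowerSeries.mk fun n =>
    ∑ i ∈ Finset.range (n + 1), PowerSeries.coeff (R := k) n ((X ^ 3 + X ^ 4) ^ 2 ^ i)

/-- The `t`-adically convergent tail `Σ_{i≥1} (t³(1+t))^{2^i}`, given coefficientwise. -/
def tailS : PowerSeries k :=
  PowerSeries.mk fun n =>
    ∑ i ∈ Finset.Icc 1 n, PowerSeries.coeff (R := k) n ((X ^ 3 * (1 + X)) ^ 2 ^ i)

/-- The `t`-adically convergent double sum `Σ_{j≥0} Σ_{ℓ=0}^{2^j-1} t^{6·2^j+2ℓ}`, given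
coefficientwise. -/
def phiTail : PowerSeries k :=
  PowerSeries.mk fun n =>
    ∑ j ∈ Finset.range (n + 1), ∑ l ∈ Finset.range (2 ^ j),
      if n = 6 * 2 ^ j + 2 * l then (1 : k) else 0

lemma aux_hX : (X ^ 3 * (1 + X) : PowerSeries k) = X ^ 3 + X ^ 4 := by ring

lemma aux_coeff_term [CharP k 2] (i n : ℕ) :
    (PowerSeries.coeff (R := k) n) ((X ^ 3 + X ^ 4 : PowerSeries k) ^ 2 ^ i)
      = (if n = 3 * 2 ^ i then (1 : k) else 0) + (if n = 4 * 2 ^ i then (1 : k) else 0) := by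
  haveI : CharP (PowerSeries k) 2 := charP_of_injective_ringHom PowerSeries.C_injective 2
  rw [add_pow_char_pow, ← pow_mul, ← pow_mul, map_add, coeff_X_pow, coeff_X_pow]

lemma aux_part1 [CharP k 2] :
    (X ^ 3 + X ^ 4 : PowerSeries k) + tailS k = paperS k := by
  ext n
  simp only [map_add, tailS, paperS, coeff_mk, aux_hX]
  rw [Finset.sum_range_succ', show Finset.Icc 1 n = Finset.Ico 1 (n + 1) from
    (Finset.Ico_add_one_right_eq_Icc (a := 1) (b := n)).symm, Finset.sum_Ico_eq_sum_range]
  simp only [Nat.add_sub_cancel, pow_zero, pow_one]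
  rw [add_comm]
  congr 1
  exact Finset.sum_congr rfl fun j _ => by rw [Nat.add_comm 1 j]

lemma aux_shift [CharP k 2] (g : ℕ → k) (m : ℕ) :
    (∑ l ∈ Finset.range m, g l) + ∑ l ∈ Finset.range m, g (l + 1) = g 0 + g m := by
  have h := Finset.sum_range_succ' g m
  have h2 := Finset.sum_range_succ g m
  have two : (2 : k) = 0 := CharTwo.two_eq_zero
  linear_combination (h2 - h) + ((∑ l ∈ Finset.range m, g l) - g 0) * two

lemma aux_key [CharP k 2] :
    tailS k = phiTail k * (1 + X : PowerSeries k) ^ 2 := by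
  haveI : CharP (PowerSeries k) 2 := charP_of_injective_ringHom PowerSeries.C_injective 2
  have hu2 : ((1 + X : PowerSeries k)) ^ 2 = 1 + X ^ 2 := by
    rw [CharTwo.add_sq, one_pow]
  rw [hu2, mul_add, mul_one]
  ext n
  rw [map_add, tailS, phiTail, coeff_mk, coeff_mul_X_pow', coeff_mk]
  simp only [aux_hX, aux_coeff_term]
  match n with
  | 0 => norm_num [Finset.filter_singleton]
  | 1 => norm_num [Finset.sum_range_succ, Finset.filter_singleton,
      show Finset.filter (fun x => 1 = 12 + 2 * x) (Finset.range 2) = ∅ from by decide]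
  | (m + 2) =>
    set n := m + 2 with hn
    rw [if_pos (by omega : 2 ≤ n)]
    rw [coeff_mk]
    -- rewrite the shifted sum's condition and extend its range
    have hsub : ∑ j ∈ Finset.range (n - 2 + 1), ∑ l ∈ Finset.range (2 ^ j),
          (if n - 2 = 6 * 2 ^ j + 2 * l then (1 : k) else 0)
        = ∑ j ∈ Finset.range (n + 1), ∑ l ∈ Finset.range (2 ^ j),
          (if n = 6 * 2 ^ j + 2 * (l + 1) then (1 : k) else 0) := by
      rw [Finset.sum_subset (Finset.range_subset_range.2 (by omega : n - 2 + 1 ≤ n + 1))]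
      · exact Finset.sum_congr rfl fun j _ => Finset.sum_congr rfl fun l _ =>
          if_congr (by omega) rfl rfl
      · intro j hj hj'
        apply Finset.sum_eq_zero
        intro l _
        rw [if_neg]
        have hlt : j < 2 ^ j := Nat.lt_two_pow_self (n := j)
        simp only [Finset.mem_range] at hj hj'
        omega
    rw [hsub, ← Finset.sum_add_distrib]
    have hinner : ∀ j ∈ Finset.range (n + 1),
        ((∑ l ∈ Finset.range (2 ^ j), (if n = 6 * 2 ^ j + 2 * l then (1 : k) else 0))
          + ∑ l ∈ Finset.range (2 ^ j), (if n = 6 * 2 ^ j + 2 * (l + 1) then (1 : k) else 0))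
        = (if n = 3 * 2 ^ (j + 1) then (1 : k) else 0)
          + (if n = 4 * 2 ^ (j + 1) then (1 : k) else 0) := by
      intro j _
      rw [aux_shift k (fun l => if n = 6 * 2 ^ j + 2 * l then (1 : k) else 0) (2 ^ j)]
      rw [show (6 * 2 ^ j + 2 * 0 : ℕ) = 3 * 2 ^ (j + 1) from by rw [pow_succ]; ring,
        show (6 * 2 ^ j + 2 * 2 ^ j : ℕ) = 4 * 2 ^ (j + 1) from by rw [pow_succ]; ring]
    rw [Finset.sum_congr rfl hinner]
    -- now the tailS side
    rw [show Finset.Icc 1 n = Finset.Ico 1 (n + 1) from (Finset.Ico_add_one_right_eq_Icc (a := 1) (b := n)).symm,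
      Finset.sum_Ico_eq_sum_range]
    simp only [Nat.add_sub_cancel]
    rw [Finset.sum_range_succ (fun j => (if n = 3 * 2 ^ (j + 1) then (1 : k) else 0)
      + (if n = 4 * 2 ^ (j + 1) then (1 : k) else 0))]
    have hlast : ((if n = 3 * 2 ^ (n + 1) then (1 : k) else 0)
        + (if n = 4 * 2 ^ (n + 1) then (1 : k) else 0)) = 0 := by
      have hlt : n + 1 < 2 ^ (n + 1) := Nat.lt_two_pow_self (n := n + 1)
      rw [if_neg (by omega), if_neg (by omega), add_zero]
    rw [hlast, add_zero]
    exact Finset.sum_congr rfl fun j _ => by rw [Nat.add_comm 1 j]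

theorem tail_decomposition [CharP k 2] :
    (X ^ 3 + X ^ 4 : PowerSeries k) + tailS k = paperS k ∧
      X * (1 + X : PowerSeries k)⁻¹ +
          (X ^ 3 + X ^ 4 : PowerSeries k) * (((1 + X : PowerSeries k) ^ 2)⁻¹) +
          tailS k * (((1 + X : PowerSeries k) ^ 2)⁻¹) =
        X + X ^ 2 + phiTail k := by
  haveI : CharP (PowerSeries k) 2 := charP_of_injective_ringHom PowerSeries.C_injective 2
  have h1 := aux_part1 k
  refine ⟨h1, ?_⟩
  have hcu : constantCoeff (1 + X : PowerSeries k) ≠ 0 := by simp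
  have hcu2 : constantCoeff ((1 + X : PowerSeries k) ^ 2) ≠ 0 := by
    rw [map_pow]; simp
  have hne : ((1 + X : PowerSeries k) ^ 2) ≠ 0 := fun h => hcu2 (by rw [h, map_zero])
  have huinv : (1 + X : PowerSeries k) * (1 + X : PowerSeries k)⁻¹ = 1 :=
    PowerSeries.mul_inv_cancel _ hcu
  have hu2inv : ((1 + X : PowerSeries k) ^ 2) * ((1 + X : PowerSeries k) ^ 2)⁻¹ = 1 :=
    PowerSeries.mul_inv_cancel _ hcu2
  apply mul_right_cancel₀ hne
  have e1 : (X * (1 + X : PowerSeries k)⁻¹ +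
      (X ^ 3 + X ^ 4 : PowerSeries k) * (((1 + X : PowerSeries k) ^ 2)⁻¹) +
      tailS k * (((1 + X : PowerSeries k) ^ 2)⁻¹)) * (1 + X) ^ 2
      = X * (1 + X) * ((1 + X) * (1 + X)⁻¹)
        + ((X ^ 3 + X ^ 4) + tailS k) * (((1 + X) ^ 2) * ((1 + X) ^ 2)⁻¹) := by
    ring
  rw [e1, huinv, hu2inv, mul_one, mul_one, h1, ← h1, aux_key k]
  have hu2 : ((1 + X : PowerSeries k)) ^ 2 = 1 + X ^ 2 := by
    rw [CharTwo.add_sq, one_pow]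
  rw [hu2]
  ring
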